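/- Let p be a prime and let G be a finite irreducible subgroup of GL(p,ℂ) all of whose elements are monomial matrices. Then the diagonal subgroup G ∩ D(p,ℂ) is a maximal abelian normal subgroup of G; that is, G ∩ D(p,ℂ) is abelian and normal in G, and it is not properly contained in any abelian normal subgroup of G. -/

import Mathlib

/-- `σ` is the permutation part of the monomial matrix `g`. -/
def HasPermPart {m : Type*} [DecidableEq m] {F : Type*} [Field F]
    (g : Matrix m m F) (σ : Equiv.Perm m) : Prop :=
  ∃ d : m → Fˣ, ∀ i j, g i j = if i = σ j then (d j : F) else 0

/-- A matrix is monomial if it has a permutation part. -/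
def IsMonomial {m : Type*} [DecidableEq m] {F : Type*} [Field F]
    (g : Matrix m m F) : Prop :=
  ∃ σ : Equiv.Perm m, HasPermPart g σ

theorem Equiv.Perm.apply_inv_self {α : Type*} (f : Equiv.Perm α) (x : α) : f (f⁻¹ x) = x :=
  f.apply_symm_apply x

theorem Equiv.Perm.inv_apply_self {α : Type*} (f : Equiv.Perm α) (x : α) : f⁻¹ (f x) = x :=
  f.symm_apply_apply x

section Aux
variable {m : Type*} [Fintype m] [DecidableEq m] {F : Type*} [Field F]

lemma hasPermPart_one : HasPermPart (1 : Matrix m m F) 1 :=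
  ⟨fun _ => 1, fun i j => by simp [Matrix.one_apply]; exact if_congr Iff.rfl rfl rfl⟩

lemma HasPermPart.mul {g h : Matrix m m F} {σ τ : Equiv.Perm m}
    (hg : HasPermPart g σ) (hh : HasPermPart h τ) : HasPermPart (g * h) (σ * τ) := by
  obtain ⟨d, hd⟩ := hg; obtain ⟨e, he⟩ := hh
  refine ⟨fun j => d (τ j) * e j, fun i j => ?_⟩
  rw [Matrix.mul_apply]
  simp only [hd, he]
  rw [Finset.sum_eq_single (τ j)]
  · simp [Equiv.Perm.mul_apply]; exact if_congr Iff.rfl rfl rfl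
  · intro k _ hk; simp [hk]
  · simp

lemma permPart_unique {g : Matrix m m F} {σ τ : Equiv.Perm m}
    (h1 : HasPermPart g σ) (h2 : HasPermPart g τ) : σ = τ := by
  obtain ⟨d, hd⟩ := h1; obtain ⟨e, he⟩ := h2
  ext j
  by_contra hne
  have h := (hd (σ j) j).symm.trans (he (σ j) j)
  simp [hne] at h

lemma HasPermPart.isDiag {g : Matrix m m F} (h : HasPermPart g 1) : g.IsDiag := by
  obtain ⟨d, hd⟩ := h
  intro i j hne
  rw [hd]
  simp [hne]

lemma HasPermPart.eq_one_of_isDiag {g : Matrix m m F} {σ : Equiv.Perm m}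
    (h : HasPermPart g σ) (hd : g.IsDiag) : σ = 1 := by
  obtain ⟨d, hdd⟩ := h
  ext j
  by_contra hne
  have h0 : g (σ j) j = 0 := hd hne
  rw [hdd] at h0
  simp at h0

lemma isDiag_hasPermPart (u : (Matrix m m F)ˣ) (h : (↑u : Matrix m m F).IsDiag) :
    HasPermPart (↑u : Matrix m m F) 1 := by
  have hdet : IsUnit (↑u : Matrix m m F).det := (Matrix.isUnit_iff_isUnit_det _).mp u.isUnit
  have hne : ∀ i, (↑u : Matrix m m F) i i ≠ 0 := by
    have hd : Matrix.diagonal (Matrix.diag (↑u : Matrix m m F)) = (↑u : Matrix m m F) :=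
      h.diagonal_diag
    rw [← hd, Matrix.det_diagonal] at hdet
    have := hdet.ne_zero
    rw [Finset.prod_ne_zero_iff] at this
    intro i; exact this i (Finset.mem_univ i)
  refine ⟨fun j => Units.mk0 _ (hne j), fun i j => ?_⟩
  by_cases hij : i = j
  · subst hij; simp
  · simp [hij, h hij]

lemma HasPermPart.inv (u : (Matrix m m F)ˣ) {σ : Equiv.Perm m}
    (h : HasPermPart (↑u : Matrix m m F) σ) :
    HasPermPart (↑(u⁻¹) : Matrix m m F) σ⁻¹ := by
  obtain ⟨d, hd⟩ := h
  set B : Matrix m m F := Matrix.of fun i j => if i = σ⁻¹ j then (((d (σ⁻¹ j))⁻¹ : Fˣ) : F) else 0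
    with hB
  have hBij : ∀ i j, B i j = if i = σ⁻¹ j then (((d (σ⁻¹ j))⁻¹ : Fˣ) : F) else 0 := fun i j => rfl
  have huB : (↑u : Matrix m m F) * B = 1 := by
    ext i j
    rw [Matrix.mul_apply]
    simp only [hd, hBij]
    rw [Finset.sum_eq_single (σ⁻¹ j)]
    · by_cases hij : i = j
      · subst hij; simp
      · have : ¬ i = σ (σ⁻¹ j) := by simpa using hij
        simp [this, Matrix.one_apply, hij]
    · intro k _ hk; simp [hk]; intro h; exact absurd h hk
    · simp
  have hinv : (↑(u⁻¹) : Matrix m m F) = B := by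
    calc (↑(u⁻¹) : Matrix m m F) = ↑(u⁻¹) * ((↑u : Matrix m m F) * B) := by rw [huB, mul_one]
    _ = (↑(u⁻¹) * (↑u : Matrix m m F)) * B := by rw [mul_assoc]
    _ = B := by rw [← Units.val_mul, inv_mul_cancel, Units.val_one, one_mul]
  rw [hinv]
  exact ⟨fun j => (d (σ⁻¹ j))⁻¹, fun i j => hBij i j⟩

lemma HasPermPart.pow (u : (Matrix m m F)ˣ) {σ : Equiv.Perm m}
    (h : HasPermPart (↑u : Matrix m m F) σ) (k : ℕ) :
    HasPermPart (↑(u ^ k) : Matrix m m F) (σ ^ k) := by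
  induction k with
  | zero => simpa using hasPermPart_one
  | succ n ih =>
      rw [pow_succ, pow_succ, Units.val_mul]
      exact ih.mul h

lemma Matrix.IsDiag.commute_matrix {A B : Matrix m m F} (hA : A.IsDiag) (hB : B.IsDiag) :
    A * B = B * A := by
  rw [← hA.diagonal_diag, ← hB.diagonal_diag, Matrix.diagonal_mul_diagonal,
    Matrix.diagonal_mul_diagonal]
  simp [mul_comm]

lemma diag_entries_const {A bM : Matrix m m F} {ρ : Equiv.Perm m}
    (hb : HasPermPart bM ρ) (hA : A.IsDiag) (hcomm : A * bM = bM * A) :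
    ∀ j, A (ρ j) (ρ j) = A j j := by
  intro j
  obtain ⟨d, hd⟩ := hb
  have h1 : (A * bM) (ρ j) j = A (ρ j) (ρ j) * (d j : F) := by
    rw [Matrix.mul_apply, Finset.sum_eq_single (ρ j)]
    · rw [hd]; simp
    · intro k _ hk
      rw [hd]
      have : ¬ (k = ρ j) := hk
      simp [this]
    · simp
  have h2 : (bM * A) (ρ j) j = (d j : F) * A j j := by
    rw [Matrix.mul_apply, Finset.sum_eq_single j]
    · rw [hd]; simp
    · intro k _ hk
      have : A k j = 0 := hA hk
      simp [this]
    · simp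
  have hdj : (d j : F) ≠ 0 := (d j).ne_zero
  have h3 : A (ρ j) (ρ j) * (d j : F) = (d j : F) * A j j := by rw [← h1, hcomm, h2]
  rw [mul_comm ((d j : F))] at h3
  exact mul_right_cancel₀ hdj h3

end Aux

open Finset in
lemma orb_lemma {p : ℕ} (hp : p.Prime) (N : Subgroup (Equiv.Perm (Fin p)))
    (T : Set (Equiv.Perm (Fin p)))
    (hTinv : ∀ t ∈ T, t⁻¹ ∈ T)
    (hT : ∀ x y : Fin p, ∃ t ∈ T, t x = y)
    (hnorm : ∀ t ∈ T, ∀ n ∈ N, t * n * t⁻¹ ∈ N)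
    (x₀ : Fin p) (n₀ : Equiv.Perm (Fin p)) (hn₀ : n₀ ∈ N) (hx₀ : n₀ x₀ ≠ x₀) :
    ∀ x y : Fin p, ∃ n ∈ N, n x = y := by
  classical
  set f : Fin p → Finset (Fin p) :=
    fun x => Finset.univ.filter (fun y => ∃ n ∈ N, n x = y) with hf
  have hmemf : ∀ x y : Fin p, y ∈ f x ↔ ∃ n ∈ N, n x = y := by
    intro x y; simp [hf]
  have hmem : ∀ x, x ∈ f x := fun x => (hmemf x x).mpr ⟨1, N.one_mem, rfl⟩
  have horb : ∀ x y, y ∈ f x → f x = f y := by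
    intro x y hy
    obtain ⟨n, hn, hnx⟩ := (hmemf x y).mp hy
    ext z
    rw [hmemf, hmemf]
    constructor
    · rintro ⟨m, hm, hmx⟩
      exact ⟨m * n⁻¹, N.mul_mem hm (N.inv_mem hn), by simp [← hnx, hmx]⟩
    · rintro ⟨m, hm, hmy⟩
      exact ⟨m * n, N.mul_mem hm hn, by simp [hnx, hmy]⟩
  have hcard : ∀ x, (f x).card = (f x₀).card := by
    intro x
    obtain ⟨t, ht, htx⟩ := hT x x₀
    have himg : (f x).image t = f x₀ := by
      ext z
      simp only [Finset.mem_image]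
      rw [hmemf]
      constructor
      · rintro ⟨y, hy, rfl⟩
        obtain ⟨n, hn, hnx⟩ := (hmemf x y).mp hy
        exact ⟨t * n * t⁻¹, hnorm t ht n hn, by simp [← htx, ← hnx]⟩
      · rintro ⟨n, hn, hnx⟩
        refine ⟨(t⁻¹ * n * t) x, (hmemf x _).mpr ⟨t⁻¹ * n * t,
          hnorm t⁻¹ (hTinv t ht) n hn, rfl⟩, ?_⟩
        simp [← hnx, htx]
    rw [← himg]
    exact (Finset.card_image_of_injective _ t.injective).symm
  have h2 : 2 ≤ (f x₀).card := by
    rw [Nat.succ_le_iff]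
    exact Finset.one_lt_card.mpr ⟨x₀, hmem x₀, n₀ x₀, (hmemf _ _).mpr ⟨n₀, hn₀, rfl⟩,
      fun h => hx₀ h.symm⟩
  have hpcount : p = ((Finset.univ : Finset (Fin p)).image f).card * (f x₀).card := by
    have hfib := Finset.card_eq_sum_card_fiberwise
      (f := f) (s := (Finset.univ : Finset (Fin p))) (t := Finset.univ.image f)
      (fun x _ => Finset.mem_image_of_mem f (Finset.mem_univ x))
    rw [Finset.card_univ, Fintype.card_fin] at hfib
    calc p = ∑ b ∈ Finset.univ.image f, (Finset.univ.filter (fun a => f a = b)).card := hfib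
    _ = ∑ _b ∈ Finset.univ.image f, (f x₀).card := by
        refine Finset.sum_congr rfl (fun O hO => ?_)
        obtain ⟨x1, _, rfl⟩ := Finset.mem_image.mp hO
        have hOx : Finset.univ.filter (fun x => f x = f x1) = f x1 := by
          ext z
          simp only [Finset.mem_filter, Finset.mem_univ, true_and]
          constructor
          · intro h; rw [← h]; exact hmem z
          · intro h; exact (horb x1 z h).symm
        rw [hOx, hcard]
    _ = ((Finset.univ : Finset (Fin p)).image f).card * (f x₀).card := by
        rw [Finset.sum_const, smul_eq_mul]
  have hcardp : (f x₀).card = p := by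
    rcases (Nat.Prime.eq_one_or_self_of_dvd hp (f x₀).card
      ⟨((Finset.univ : Finset (Fin p)).image f).card, hpcount.trans (Nat.mul_comm _ _)⟩) with h | h
    · omega
    · exact h
  have huniv : ∀ x, f x = Finset.univ := by
    intro x
    apply Finset.eq_univ_of_card
    rw [hcard, hcardp, Fintype.card_fin]
  intro x y
  exact (hmemf x y).mp (by rw [huniv x]; exact Finset.mem_univ y)

lemma fun_const_of_zpow {m : Type*} {X : Type*} (u : m → X) (π : Equiv.Perm m)
    (h : ∀ x, u (π x) = u x) : ∀ (k : ℤ) (x : m), u ((π ^ k) x) = u x := by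
  have hinv : ∀ x, u (π⁻¹ x) = u x := fun x => by
    conv_rhs => rw [← Equiv.Perm.apply_inv_self π x, h]
  intro k
  induction k using Int.induction_on with
  | zero => simp
  | succ n ih =>
      intro x
      have hs : (π ^ ((n : ℤ) + 1)) x = (π ^ (n : ℤ)) (π x) := by
        rw [zpow_add, zpow_one, Equiv.Perm.mul_apply]
      rw [hs, ih, h]
  | pred n ih =>
      intro x
      have hs : (π ^ (-(n : ℤ) - 1)) x = (π ^ (-(n : ℤ))) (π⁻¹ x) := by
        rw [zpow_sub, zpow_one, Equiv.Perm.mul_apply]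
      rw [hs, ih, hinv]

lemma mem_zpowers_of_commute {m : Type*} {ρ π : Equiv.Perm m} (x₀ : m)
    (htrans : ∀ y, ∃ k : ℤ, (ρ ^ k) x₀ = y) (hc : Commute π ρ) : ∃ k : ℤ, π = ρ ^ k := by
  obtain ⟨k, hk⟩ := htrans (π x₀)
  refine ⟨k, ?_⟩
  ext y
  obtain ⟨n, hn⟩ := htrans y
  have hcn : π * ρ ^ n = ρ ^ n * π := (hc.zpow_right n).eq
  calc π y = (π * ρ ^ n) x₀ := by rw [Equiv.Perm.mul_apply, hn]
  _ = (ρ ^ n) (π x₀) := by rw [hcn, Equiv.Perm.mul_apply]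
  _ = (ρ ^ n * ρ ^ k) x₀ := by rw [← hk, Equiv.Perm.mul_apply]
  _ = (ρ ^ k * ρ ^ n) x₀ := by rw [← zpow_add, ← zpow_add, add_comm]
  _ = (ρ ^ k) y := by rw [Equiv.Perm.mul_apply, hn]

theorem diagonal_subgroup_maximal_abelian_normal
    {p : ℕ} (hp : p.Prime)
    (G : Subgroup (Matrix.GeneralLinearGroup (Fin p) ℂ)) (hfin : Finite G)
    (hmono : ∀ g ∈ G, IsMonomial (g : Matrix (Fin p) (Fin p) ℂ))
    (hirr : ∀ W : Submodule ℂ (Fin p → ℂ),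
      (∀ g ∈ G, ∀ v ∈ W, Matrix.mulVec (g : Matrix (Fin p) (Fin p) ℂ) v ∈ W) →
      W = ⊥ ∨ W = ⊤) :
    (∀ a ∈ G, ∀ b ∈ G, Matrix.IsDiag (a : Matrix (Fin p) (Fin p) ℂ) →
      Matrix.IsDiag (b : Matrix (Fin p) (Fin p) ℂ) → a * b = b * a) ∧
    (∀ g ∈ G, ∀ a ∈ G, Matrix.IsDiag (a : Matrix (Fin p) (Fin p) ℂ) →
      Matrix.IsDiag ((g * a * g⁻¹ : Matrix.GeneralLinearGroup (Fin p) ℂ) :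
        Matrix (Fin p) (Fin p) ℂ)) ∧
    (∀ B : Subgroup (Matrix.GeneralLinearGroup (Fin p) ℂ), B ≤ G →
      (∀ x ∈ B, ∀ y ∈ B, x * y = y * x) →
      (∀ g ∈ G, ∀ b ∈ B, g * b * g⁻¹ ∈ B) →
      (∀ a ∈ G, Matrix.IsDiag (a : Matrix (Fin p) (Fin p) ℂ) → a ∈ B) →
      ∀ b ∈ B, Matrix.IsDiag (b : Matrix (Fin p) (Fin p) ℂ)) := by
  classical
  refine ⟨?_, ?_, ?_⟩
  · -- abelian
    intro a _ b _ hda hdb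
    apply Units.ext
    rw [Units.val_mul, Units.val_mul]
    exact hda.commute_matrix hdb
  · -- normal
    intro g hg a _ hda
    obtain ⟨σ, hσ⟩ := hmono g hg
    have h1 : HasPermPart ((a : Matrix (Fin p) (Fin p) ℂ)) 1 := isDiag_hasPermPart a hda
    have h2 : HasPermPart ((g * a * g⁻¹ : Matrix.GeneralLinearGroup (Fin p) ℂ) :
        Matrix (Fin p) (Fin p) ℂ) (σ * 1 * σ⁻¹) := by
      rw [Units.val_mul, Units.val_mul]
      exact (hσ.mul h1).mul (HasPermPart.inv g hσ)
    have h3 : σ * 1 * σ⁻¹ = 1 := by group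
    rw [h3] at h2
    exact h2.isDiag
  · -- maximality
    intro B hBG hBab hBnorm hBdiag b hbB
    by_contra hnd
    have hbG : b ∈ G := hBG hbB
    set T : Set (Equiv.Perm (Fin p)) :=
      {σ | ∃ g, g ∈ G ∧ HasPermPart (g : Matrix (Fin p) (Fin p) ℂ) σ} with hT
    have hT1 : (1 : Equiv.Perm (Fin p)) ∈ T := ⟨1, G.one_mem, by
      rw [Units.val_one]; exact hasPermPart_one⟩
    have hTmul : ∀ σ ∈ T, ∀ σ' ∈ T, σ * σ' ∈ T := by
      rintro σ ⟨g, hg, hgp⟩ σ' ⟨g', hg', hgp'⟩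
      exact ⟨g * g', G.mul_mem hg hg', by rw [Units.val_mul]; exact hgp.mul hgp'⟩
    have hTinv : ∀ σ ∈ T, σ⁻¹ ∈ T := by
      rintro σ ⟨g, hg, hgp⟩
      exact ⟨g⁻¹, G.inv_mem hg, HasPermPart.inv g hgp⟩
    -- transitivity of T from irreducibility
    have z : Fin p := ⟨0, hp.pos⟩
    have hTtrans : ∀ x y : Fin p, ∃ t ∈ T, t x = y := by
      set S : Set (Fin p) := {i | ∃ t ∈ T, t z = i} with hS
      have hzS : z ∈ S := ⟨1, hT1, rfl⟩
      set W : Submodule ℂ (Fin p → ℂ) :=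
        { carrier := {v | ∀ i, i ∉ S → v i = 0}
          add_mem' := fun hu hv i hi => by
            simp only [Set.mem_setOf_eq] at hu hv
            simp only [Pi.add_apply, hu i hi, hv i hi, add_zero]
          zero_mem' := fun i _ => rfl
          smul_mem' := fun c v hv i hi => by
            simp only [Set.mem_setOf_eq] at hv
            simp only [Pi.smul_apply, hv i hi, smul_zero] } with hW
      have hWmem : ∀ v : Fin p → ℂ, v ∈ W ↔ ∀ i, i ∉ S → v i = 0 := fun v => Iff.rfl
      have hWinv : ∀ g ∈ G, ∀ v ∈ W,
          Matrix.mulVec (g : Matrix (Fin p) (Fin p) ℂ) v ∈ W := by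
        intro g hg v hv
        rw [hWmem] at hv
        rw [hWmem]
        intro i hi
        obtain ⟨σ, d, hd⟩ := hmono g hg
        have hsum : Matrix.mulVec (g : Matrix (Fin p) (Fin p) ℂ) v i
            = (d (σ⁻¹ i) : ℂ) * v (σ⁻¹ i) := by
          have hmv : Matrix.mulVec (g : Matrix (Fin p) (Fin p) ℂ) v i
              = ∑ k, (g : Matrix (Fin p) (Fin p) ℂ) i k * v k := rfl
          rw [hmv, Finset.sum_eq_single (σ⁻¹ i)]
          · rw [hd]; simp
          · intro k _ hk
            rw [hd]
            have hik : ¬ i = σ k := by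
              intro h; exact hk (by rw [h, Equiv.Perm.inv_apply_self])
            simp [hik]
          · simp
        have hnotS : σ⁻¹ i ∉ S := by
          intro hmem
          obtain ⟨t, ht, htz⟩ := hmem
          have hσT : σ ∈ T := ⟨g, hg, ⟨d, hd⟩⟩
          exact hi ⟨σ * t, hTmul σ hσT t ht, by
            rw [Equiv.Perm.mul_apply, htz, Equiv.Perm.apply_inv_self]⟩
        rw [hsum, hv _ hnotS, mul_zero]
      have hSuniv : ∀ i : Fin p, i ∈ S := by
        rcases hirr W hWinv with hbot | htop
        · exfalso
          have hzW : (Pi.single z 1 : Fin p → ℂ) ∈ W := by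
            rw [hWmem]
            intro i hi
            have : i ≠ z := fun h => hi (h ▸ hzS)
            exact Pi.single_eq_of_ne this 1
          rw [hbot, Submodule.mem_bot] at hzW
          have := congrFun hzW z
          simp at this
        · intro i
          by_contra hiS
          have hmem : (Pi.single i 1 : Fin p → ℂ) ∈ W := htop ▸ Submodule.mem_top
          rw [hWmem] at hmem
          have := hmem i hiS
          simp at this
      intro x y
      obtain ⟨tx, htx, hx⟩ := hSuniv x
      obtain ⟨ty, hty, hy⟩ := hSuniv y
      exact ⟨ty * tx⁻¹, hTmul ty hty tx⁻¹ (hTinv tx htx), by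
        rw [Equiv.Perm.mul_apply, ← hx, Equiv.Perm.inv_apply_self, hy]⟩
    -- permutation part of b
    obtain ⟨ρ, hρb⟩ := hmono b hbG
    have hρT : ρ ∈ T := ⟨b, hbG, hρb⟩
    have hρne : ρ ≠ 1 := by
      intro h
      rw [h] at hρb
      exact hnd hρb.isDiag
    obtain ⟨j₀, hj₀⟩ : ∃ j, ρ j ≠ j := by
      by_contra h
      push_neg at h
      exact hρne (Equiv.ext h)
    -- conjugates of ρ commute pairwise
    have hgen_comm : ∀ σ ∈ T, ∀ σ' ∈ T,
        Commute (σ * ρ * σ⁻¹) (σ' * ρ * σ'⁻¹) := by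
      rintro σ ⟨g, hg, hgp⟩ σ' ⟨g', hg', hgp'⟩
      have h1 : g * b * g⁻¹ ∈ B := hBnorm g hg b hbB
      have h2 : g' * b * g'⁻¹ ∈ B := hBnorm g' hg' b hbB
      have hc : (g * b * g⁻¹) * (g' * b * g'⁻¹) = (g' * b * g'⁻¹) * (g * b * g⁻¹) :=
        hBab _ h1 _ h2
      have p1 : HasPermPart ((g * b * g⁻¹ : Matrix.GeneralLinearGroup (Fin p) ℂ) :
          Matrix (Fin p) (Fin p) ℂ) (σ * ρ * σ⁻¹) := by
        rw [Units.val_mul, Units.val_mul]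
        exact (hgp.mul hρb).mul (HasPermPart.inv g hgp)
      have p2 : HasPermPart ((g' * b * g'⁻¹ : Matrix.GeneralLinearGroup (Fin p) ℂ) :
          Matrix (Fin p) (Fin p) ℂ) (σ' * ρ * σ'⁻¹) := by
        rw [Units.val_mul, Units.val_mul]
        exact (hgp'.mul hρb).mul (HasPermPart.inv g' hgp')
      have q1 := p1.mul p2
      have q2 := p2.mul p1
      rw [← Units.val_mul] at q1 q2
      rw [hc] at q1
      exact permPart_unique q1 q2
    -- the normal closure of ρ
    set gens : Set (Equiv.Perm (Fin p)) := {π | ∃ σ ∈ T, π = σ * ρ * σ⁻¹} with hgens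
    set N : Subgroup (Equiv.Perm (Fin p)) := Subgroup.closure gens with hN
    have hρgen : ρ ∈ gens := ⟨1, hT1, by group⟩
    have hρN : ρ ∈ N := Subgroup.subset_closure hρgen
    have hNcommρ : ∀ n ∈ N, Commute n ρ := by
      intro n hn
      induction hn using Subgroup.closure_induction with
      | mem x hx =>
          obtain ⟨σ, hσ, rfl⟩ := hx
          have := hgen_comm σ hσ 1 hT1
          simpa using this
      | one => exact Commute.one_left ρ
      | mul x y _ _ hx hy => exact hx.mul_left hy
      | inv x _ hx => exact hx.inv_left
    have hNnorm : ∀ t ∈ T, ∀ n ∈ N, t * n * t⁻¹ ∈ N := by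
      intro t ht n hn
      induction hn using Subgroup.closure_induction with
      | mem x hx =>
          obtain ⟨σ, hσ, rfl⟩ := hx
          exact Subgroup.subset_closure ⟨t * σ, hTmul t ht σ hσ, by group⟩
      | one => simpa using N.one_mem
      | mul x y _ _ hx hy =>
          have hxy : t * (x * y) * t⁻¹ = (t * x * t⁻¹) * (t * y * t⁻¹) := by group
          rw [hxy]; exact N.mul_mem hx hy
      | inv x _ hx =>
          have hxi : t * x⁻¹ * t⁻¹ = (t * x * t⁻¹)⁻¹ := by group
          rw [hxi]; exact N.inv_mem hx
    have hNtrans : ∀ x y : Fin p, ∃ n ∈ N, n x = y :=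
      orb_lemma hp N T hTinv hTtrans hNnorm j₀ ρ hρN hj₀
    -- the cyclic group generated by ρ is transitive
    have hZnorm : ∀ t ∈ (N : Set (Equiv.Perm (Fin p))), ∀ n ∈ Subgroup.zpowers ρ,
        t * n * t⁻¹ ∈ Subgroup.zpowers ρ := by
      intro t ht n hn
      obtain ⟨k, rfl⟩ := Subgroup.mem_zpowers_iff.mp hn
      have hck : Commute t (ρ ^ k) := (hNcommρ t ht).zpow_right k
      rw [hck.eq, mul_assoc, mul_inv_cancel, mul_one]
      exact Subgroup.zpow_mem _ (Subgroup.mem_zpowers ρ) k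
    have hZtrans' : ∀ x y : Fin p, ∃ n ∈ Subgroup.zpowers ρ, n x = y :=
      orb_lemma hp (Subgroup.zpowers ρ) (N : Set (Equiv.Perm (Fin p)))
        (fun t ht => N.inv_mem ht) hNtrans hZnorm j₀ ρ (Subgroup.mem_zpowers ρ) hj₀
    have htrans0 : ∀ y, ∃ k : ℤ, (ρ ^ k) j₀ = y := by
      intro y
      obtain ⟨n, hn, hnx⟩ := hZtrans' j₀ y
      obtain ⟨k, rfl⟩ := Subgroup.mem_zpowers_iff.mp hn
      exact ⟨k, hnx⟩
    -- every diagonal element of G is scalar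
    have hscal : ∀ a ∈ G, Matrix.IsDiag (a : Matrix (Fin p) (Fin p) ℂ) →
        ∃ c : ℂ, (a : Matrix (Fin p) (Fin p) ℂ) = c • (1 : Matrix (Fin p) (Fin p) ℂ) := by
      intro a haG hda
      have haB : a ∈ B := hBdiag a haG hda
      have hc : a * b = b * a := hBab a haB b hbB
      have hcm : (a : Matrix (Fin p) (Fin p) ℂ) * (b : Matrix (Fin p) (Fin p) ℂ)
          = (b : Matrix (Fin p) (Fin p) ℂ) * (a : Matrix (Fin p) (Fin p) ℂ) := by
        rw [← Units.val_mul, ← Units.val_mul, hc]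
      have hconst := diag_entries_const hρb hda hcm
      have huc : ∀ (k : ℤ) (x : Fin p),
          (fun i => (a : Matrix (Fin p) (Fin p) ℂ) i i) ((ρ ^ k) x)
          = (fun i => (a : Matrix (Fin p) (Fin p) ℂ) i i) x :=
        fun_const_of_zpow (fun i => (a : Matrix (Fin p) (Fin p) ℂ) i i) ρ hconst
      refine ⟨(a : Matrix (Fin p) (Fin p) ℂ) j₀ j₀, ?_⟩
      ext i j
      by_cases hij : i = j
      · subst hij
        obtain ⟨k, hk⟩ := htrans0 i
        have heq : (a : Matrix (Fin p) (Fin p) ℂ) i i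
            = (a : Matrix (Fin p) (Fin p) ℂ) j₀ j₀ := by
          rw [← hk]; exact huc k j₀
        simp only [Matrix.smul_apply, Matrix.one_apply_eq, smul_eq_mul, mul_one]
        exact heq
      · rw [hda hij]
        simp [Matrix.one_apply_ne hij]
    -- eigenvector of b
    haveI : Nonempty (Fin p) := ⟨j₀⟩
    obtain ⟨μ, hμ⟩ := Module.End.exists_eigenvalue
      (Matrix.mulVecLin (b : Matrix (Fin p) (Fin p) ℂ))
    obtain ⟨v, hvv⟩ := hμ.exists_hasEigenvector
    have hv0 : v ≠ 0 := hvv.right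
    have hbv : Matrix.mulVec (b : Matrix (Fin p) (Fin p) ℂ) v = μ • v := by
      have := hvv.apply_eq_smul
      rwa [Matrix.mulVecLin_apply] at this
    have hpow_ev : ∀ k : ℕ,
        Matrix.mulVec ((b : Matrix (Fin p) (Fin p) ℂ) ^ k) v = (μ ^ k) • v := by
      intro k
      induction k with
      | zero => simp [Matrix.one_mulVec]
      | succ n ih =>
          rw [pow_succ, ← Matrix.mulVec_mulVec, hbv, Matrix.mulVec_smul, ih, pow_succ]
          rw [smul_smul, mul_comm μ (μ ^ n)]
    -- conjugates of ρ are nontrivial powers of ρ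
    have hconj : ∀ σ ∈ T, σ * ρ * σ⁻¹ ∈ Subgroup.zpowers ρ ∧ σ * ρ * σ⁻¹ ≠ 1 := by
      intro σ hσ
      have hcomm : Commute (σ * ρ * σ⁻¹) ρ := by
        have := hgen_comm σ hσ 1 hT1
        simpa using this
      obtain ⟨k, hk⟩ := mem_zpowers_of_commute j₀ htrans0 hcomm
      refine ⟨Subgroup.mem_zpowers_iff.mpr ⟨k, hk.symm⟩, ?_⟩
      intro h
      apply hρne
      have hρeq : ρ = σ⁻¹ * (σ * ρ * σ⁻¹) * σ := by group
      rw [hρeq, h]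
      group
    have hzp_mem_pow : ∀ π : Equiv.Perm (Fin p), π ∈ Subgroup.zpowers ρ →
        ∃ k : ℕ, ρ ^ k = π := by
      intro π hπ
      exact ((isOfFinOrder_of_finite ρ).mem_powers_iff_mem_zpowers).mpr hπ
    -- elements of G whose permutation part is a power of ρ scale v
    have hvH : ∀ h : Matrix.GeneralLinearGroup (Fin p) ℂ, h ∈ G →
        ∀ σh, HasPermPart ((h : Matrix (Fin p) (Fin p) ℂ)) σh →
        σh ∈ Subgroup.zpowers ρ →
        ∃ c : ℂ, Matrix.mulVec ((h : Matrix (Fin p) (Fin p) ℂ)) v = c • v := by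
      intro h hhG σh hσh hzp
      obtain ⟨k, hk⟩ := hzp_mem_pow σh hzp
      have hbk : HasPermPart ((b ^ k : Matrix.GeneralLinearGroup (Fin p) ℂ) :
          Matrix (Fin p) (Fin p) ℂ) (ρ ^ k) := HasPermPart.pow b hρb k
      have hdp : HasPermPart ((h * (b ^ k)⁻¹ : Matrix.GeneralLinearGroup (Fin p) ℂ) :
          Matrix (Fin p) (Fin p) ℂ) (σh * (ρ ^ k)⁻¹) := by
        rw [Units.val_mul]
        exact hσh.mul (HasPermPart.inv (b ^ k) hbk)
      have hone : σh * (ρ ^ k)⁻¹ = 1 := by rw [← hk, mul_inv_cancel]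
      rw [hone] at hdp
      have hdG : h * (b ^ k)⁻¹ ∈ G := G.mul_mem hhG (G.inv_mem (G.pow_mem hbG k))
      obtain ⟨c, hcs⟩ := hscal _ hdG hdp.isDiag
      have hval : (h : Matrix (Fin p) (Fin p) ℂ)
          = c • ((b : Matrix (Fin p) (Fin p) ℂ) ^ k) := by
        have hsplit : (h : Matrix (Fin p) (Fin p) ℂ)
            = ((h * (b ^ k)⁻¹ : Matrix.GeneralLinearGroup (Fin p) ℂ) :
              Matrix (Fin p) (Fin p) ℂ) * ((b ^ k : Matrix.GeneralLinearGroup (Fin p) ℂ) :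
              Matrix (Fin p) (Fin p) ℂ) := by
          rw [← Units.val_mul]
          congr 1
          group
        rw [hsplit, hcs, Matrix.smul_mul, one_mul, Units.val_pow_eq_pow_val]
      rw [hval, Matrix.smul_mulVec, hpow_ev k, smul_smul]
      exact ⟨c * μ ^ k, rfl⟩
    -- nontrivial fixers
    have hfixone : ∀ π : Equiv.Perm (Fin p), Commute π ρ → π j₀ = j₀ → π = 1 := by
      intro π hc hfix
      ext y
      obtain ⟨k, hk⟩ := htrans0 y
      have hck : Commute π (ρ ^ k) := hc.zpow_right k
      have : π y = y := by
        calc π y = (π * ρ ^ k) j₀ := by rw [Equiv.Perm.mul_apply, hk]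
        _ = (ρ ^ k) (π j₀) := by rw [hck.eq, Equiv.Perm.mul_apply]
        _ = y := by rw [hfix, hk]
      simpa using congrArg Fin.val this
    -- cardinality of the powers of ρ
    have hzfin : (Subgroup.zpowers ρ : Set (Equiv.Perm (Fin p))).Finite := Set.toFinite _
    set Zfin : Finset (Equiv.Perm (Fin p)) := hzfin.toFinset with hZfin
    have hzcard : Zfin.card ≤ p := by
      have hinj : Set.InjOn (fun π : Equiv.Perm (Fin p) => π j₀) ↑Zfin := by
        intro π hπ π' hπ' heq
        simp only [hZfin, Set.Finite.coe_toFinset, SetLike.mem_coe] at hπ hπ'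
        obtain ⟨k, hk⟩ := Subgroup.mem_zpowers_iff.mp hπ
        obtain ⟨k', hk'⟩ := Subgroup.mem_zpowers_iff.mp hπ'
        subst hk; subst hk'
        simp only at heq
        have hcomm : Commute ((ρ ^ k')⁻¹ * ρ ^ k) ρ :=
          (((Commute.refl ρ).zpow_left k').inv_left).mul_left ((Commute.refl ρ).zpow_left k)
        have hfix : ((ρ ^ k')⁻¹ * ρ ^ k) j₀ = j₀ := by
          rw [Equiv.Perm.mul_apply, heq, Equiv.Perm.inv_apply_self]
        have h1 := hfixone _ hcomm hfix
        rw [inv_mul_eq_one] at h1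
        exact h1.symm
      calc Zfin.card = (Zfin.image (fun π => π j₀)).card :=
            (Finset.card_image_of_injOn hinj).symm
      _ ≤ (Finset.univ : Finset (Fin p)).card := Finset.card_le_card (Finset.subset_univ _)
      _ = p := by simp
    set Sfin : Finset (Equiv.Perm (Fin p)) := Zfin.erase 1 with hSfin
    have hScard : Sfin.card ≤ p - 1 := by
      have h1Z : (1 : Equiv.Perm (Fin p)) ∈ Zfin :=
        (Set.Finite.mem_toFinset hzfin).mpr (Subgroup.one_mem _)
      rw [hSfin, Finset.card_erase_of_mem h1Z]
      omega
    -- the choice function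
    set Q : Equiv.Perm (Fin p) → Matrix.GeneralLinearGroup (Fin p) ℂ → Prop :=
      fun π g => g ∈ G ∧ ∃ σ, HasPermPart (g : Matrix (Fin p) (Fin p) ℂ) σ ∧
        σ * ρ * σ⁻¹ = π with hQ
    set φ : Equiv.Perm (Fin p) → (Fin p → ℂ) := fun π =>
      if h : ∃ g, Q π g then
        Matrix.mulVec ((Classical.choose h : Matrix.GeneralLinearGroup (Fin p) ℂ) :
          Matrix (Fin p) (Fin p) ℂ) v
      else 0 with hφ
    -- helper A : mulVec of a Q-witness is proportional to φ π
    have helperA : ∀ π g, Q π g →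
        ∃ c : ℂ, Matrix.mulVec ((g : Matrix (Fin p) (Fin p) ℂ)) v = c • φ π := by
      intro π g hQg
      have hex : ∃ g', Q π g' := ⟨g, hQg⟩
      have hφπ : φ π = Matrix.mulVec
          ((Classical.choose hex : Matrix.GeneralLinearGroup (Fin p) ℂ) :
            Matrix (Fin p) (Fin p) ℂ) v := by
        rw [hφ]; exact dif_pos hex
      obtain ⟨hgG, σ, hσ, hcj⟩ := hQg
      obtain ⟨hg₂G, σ₂, hσ₂, hcj₂⟩ := Classical.choose_spec hex
      set g₂ := Classical.choose hex with hg₂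
      -- g₂⁻¹ * g has permutation part σ₂⁻¹ * σ which commutes with ρ
      have hpp : HasPermPart (((g₂⁻¹ * g : Matrix.GeneralLinearGroup (Fin p) ℂ)) :
          Matrix (Fin p) (Fin p) ℂ) (σ₂⁻¹ * σ) := by
        rw [Units.val_mul]
        exact (HasPermPart.inv g₂ hσ₂).mul hσ
      have hcomm : Commute (σ₂⁻¹ * σ) ρ := by
        have hconjeq : (σ₂⁻¹ * σ) * ρ * (σ₂⁻¹ * σ)⁻¹ = ρ := by
          have : (σ₂⁻¹ * σ) * ρ * (σ₂⁻¹ * σ)⁻¹ = σ₂⁻¹ * (σ * ρ * σ⁻¹) * σ₂ := by group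
          rw [this, hcj, ← hcj₂]
          group
        have := hconjeq
        rw [mul_inv_eq_iff_eq_mul] at this
        exact this
      have hzp : σ₂⁻¹ * σ ∈ Subgroup.zpowers ρ := by
        obtain ⟨k, hk⟩ := mem_zpowers_of_commute j₀ htrans0 hcomm
        exact Subgroup.mem_zpowers_iff.mpr ⟨k, hk.symm⟩
      obtain ⟨c, hc⟩ := hvH (g₂⁻¹ * g) (G.mul_mem (G.inv_mem hg₂G) hgG) _ hpp hzp
      refine ⟨c, ?_⟩
      have hgsplit : (g : Matrix (Fin p) (Fin p) ℂ)
          = ((g₂ : Matrix.GeneralLinearGroup (Fin p) ℂ) : Matrix (Fin p) (Fin p) ℂ) *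
            (((g₂⁻¹ * g : Matrix.GeneralLinearGroup (Fin p) ℂ)) :
              Matrix (Fin p) (Fin p) ℂ) := by
        rw [← Units.val_mul]
        congr 1
        group
      rw [hgsplit, ← Matrix.mulVec_mulVec, hc, Matrix.mulVec_smul, hφπ]
    -- helper B : the conjugate lies in Sfin
    have helperB : ∀ σ ∈ T, σ * ρ * σ⁻¹ ∈ Sfin := by
      intro σ hσ
      obtain ⟨hz, hne⟩ := hconj σ hσ
      exact Finset.mem_erase.mpr ⟨hne, (Set.Finite.mem_toFinset hzfin).mpr hz⟩
    -- the span
    set Wsp : Submodule ℂ (Fin p → ℂ) :=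
      Submodule.span ℂ (↑(Sfin.image φ) : Set (Fin p → ℂ)) with hWsp
    have hWspinv : ∀ g ∈ G, ∀ w ∈ Wsp,
        Matrix.mulVec (g : Matrix (Fin p) (Fin p) ℂ) w ∈ Wsp := by
      intro g hg w hw
      induction hw using Submodule.span_induction with
      | mem x hx =>
          obtain ⟨π, hπS, rfl⟩ := Finset.mem_image.mp (Finset.mem_coe.mp hx)
          by_cases hex : ∃ g', Q π g'
          · have hφπ : φ π = Matrix.mulVec
                ((Classical.choose hex : Matrix.GeneralLinearGroup (Fin p) ℂ) :
                  Matrix (Fin p) (Fin p) ℂ) v := by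
              rw [hφ]; exact dif_pos hex
            obtain ⟨hg₁G, σ₁, hσ₁, hcj₁⟩ := Classical.choose_spec hex
            set g₁ := Classical.choose hex with hg₁
            obtain ⟨σ, hσ⟩ := hmono g hg
            have hQ' : Q (σ * π * σ⁻¹) (g * g₁) := by
              refine ⟨G.mul_mem hg hg₁G, σ * σ₁, ?_, ?_⟩
              · rw [Units.val_mul]; exact hσ.mul hσ₁
              · rw [← hcj₁]; group
            have hσσ₁T : σ * σ₁ ∈ T :=
              hTmul σ ⟨g, hg, hσ⟩ σ₁ ⟨g₁, hg₁G, hσ₁⟩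
            have hmem' : σ * π * σ⁻¹ ∈ Sfin := by
              have := helperB (σ * σ₁) hσσ₁T
              have heq : (σ * σ₁) * ρ * (σ * σ₁)⁻¹ = σ * π * σ⁻¹ := by
                rw [← hcj₁]; group
              rwa [heq] at this
            obtain ⟨c, hc⟩ := helperA (σ * π * σ⁻¹) (g * g₁) hQ'
            have hcalc : Matrix.mulVec (g : Matrix (Fin p) (Fin p) ℂ) (φ π)
                = c • φ (σ * π * σ⁻¹) := by
              rw [hφπ, Matrix.mulVec_mulVec, ← Units.val_mul, hc]
            rw [hcalc]
            exact Submodule.smul_mem _ c (Submodule.subset_span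
              (Finset.mem_coe.mpr (Finset.mem_image_of_mem φ hmem')))
          · have hφ0 : φ π = 0 := by rw [hφ]; exact dif_neg hex
            rw [hφ0, Matrix.mulVec_zero]
            exact Wsp.zero_mem
      | zero => rw [Matrix.mulVec_zero]; exact Wsp.zero_mem
      | add x y _ _ hx hy => rw [Matrix.mulVec_add]; exact Wsp.add_mem hx hy
      | smul c x _ hx => rw [Matrix.mulVec_smul]; exact Wsp.smul_mem c hx
    -- φ ρ is nonzero and in Wsp
    have hmulvec_ne : ∀ g : Matrix.GeneralLinearGroup (Fin p) ℂ,
        Matrix.mulVec ((g : Matrix (Fin p) (Fin p) ℂ)) v ≠ 0 := by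
      intro g h
      apply hv0
      have hrec : Matrix.mulVec (((g⁻¹ : Matrix.GeneralLinearGroup (Fin p) ℂ)) :
          Matrix (Fin p) (Fin p) ℂ) (Matrix.mulVec ((g : Matrix (Fin p) (Fin p) ℂ)) v)
          = v := by
        rw [Matrix.mulVec_mulVec, ← Units.val_mul, inv_mul_cancel, Units.val_one,
          Matrix.one_mulVec]
      rw [h, Matrix.mulVec_zero] at hrec
      exact hrec.symm
    have hρSfin : ρ ∈ Sfin := Finset.mem_erase.mpr
      ⟨hρne, (Set.Finite.mem_toFinset hzfin).mpr (Subgroup.mem_zpowers ρ)⟩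
    have hexρ : ∃ g, Q ρ g := ⟨b, hbG, ρ, hρb, by group⟩
    have hφρne : φ ρ ≠ 0 := by
      have hφρ : φ ρ = Matrix.mulVec
          ((Classical.choose hexρ : Matrix.GeneralLinearGroup (Fin p) ℂ) :
            Matrix (Fin p) (Fin p) ℂ) v := by
        rw [hφ]; exact dif_pos hexρ
      rw [hφρ]
      exact hmulvec_ne _
    have hφρW : φ ρ ∈ Wsp := Submodule.subset_span
      (Finset.mem_coe.mpr (Finset.mem_image_of_mem φ hρSfin))
    -- conclude
    rcases hirr Wsp hWspinv with hbot | htop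
    · rw [hbot, Submodule.mem_bot] at hφρW
      exact hφρne hφρW
    · have hrank1 : Module.finrank ℂ Wsp ≤ (Sfin.image φ).card := by
        rw [hWsp]
        exact finrank_span_finset_le_card _
      have hrank2 : (Sfin.image φ).card ≤ p - 1 :=
        le_trans Finset.card_image_le hScard
      have hranktop : Module.finrank ℂ Wsp = p := by
        rw [htop, finrank_top, Module.finrank_pi]
        simp
      have := hp.two_le
      omega
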